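/- For every k ∈ ℕ₀ and every n ≥ 2, the number of matchings on [2n] which have exactly k crossings and whose last two edges are nested equals the number of matchings on [2n] which have exactly k nestings and whose last two edges are separated (neither crossing nor nested). -/

import Mathlib

/-- Number of crossings of a matching given by its set of edges `(a, b)` with `a < b`:
unordered pairs of edges `e, f` with `min e < min f < max e < max f`. -/
def crStat (s : Finset (ℕ × ℕ)) : ℕ :=
  ((s ×ˢ s).filter fun p => p.1.1 < p.2.1 ∧ p.2.1 < p.1.2 ∧ p.1.2 < p.2.2).card

/-- Number of nestings: unordered pairs of edges `e, f` with `min e < min f < max f < max e`. -/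
def neStat (s : Finset (ℕ × ℕ)) : ℕ :=
  ((s ×ˢ s).filter fun p => p.1.1 < p.2.1 ∧ p.2.2 < p.1.2).card

/-- Number of camels (separated pairs): unordered pairs of edges `e, f` with `max e < min f`. -/
def caStat (s : Finset (ℕ × ℕ)) : ℕ :=
  ((s ×ˢ s).filter fun p => p.1.2 < p.2.1).card

/-- `s` is the edge set of a matching on `[2n] = {1, …, 2n}`: `n` edges `(a, b)` with
`a < b`, and every vertex of `[2n]` belongs to exactly one edge. -/
def IsMatching (n : ℕ) (s : Finset (ℕ × ℕ)) : Prop :=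
  s.card = n ∧
  (∀ e ∈ s, e.1 < e.2 ∧ 1 ≤ e.1 ∧ e.2 ≤ 2 * n) ∧
  (∀ v : ℕ, 1 ≤ v → v ≤ 2 * n → ∃! e, e ∈ s ∧ (v = e.1 ∨ v = e.2))

/-- The order isomorphism `[2n] → {2, …, 2n+2} \ {x}`. -/
def shiftV (x v : ℕ) : ℕ := if v + 1 < x then v + 1 else v + 2

/-- The matching on `[2n+2]` obtained from a matching on `[2n]` by relabeling its vertices
order-isomorphically as `{2, …, 2n+2} \ {x}` and adding the new first edge `{1, x}`. -/
def addFirst (x : ℕ) (s : Finset (ℕ × ℕ)) : Finset (ℕ × ℕ) :=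
  insert (1, x) (s.image fun e => (shiftV x e.1, shiftV x e.2))

/-- All matchings obtained from `s` by adding a new first edge in all possible ways. -/
def childrenM (s : Finset (ℕ × ℕ)) : Multiset (Finset (ℕ × ℕ)) :=
  (Finset.Icc 2 (2 * s.card + 2)).val.map fun x => addFirst x s

/-- `levelM s l` is the multiset `T(s, l)` of matchings obtained from `s` by `l` successive
additions of a new first edge in all possible ways. -/
def levelM (s : Finset (ℕ × ℕ)) : ℕ → Multiset (Finset (ℕ × ℕ))
  | 0 => {s}
  | l + 1 => (levelM s l).bind childrenM

/-- Two edges are nested (one covers the other). -/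
def NestedPair (e f : ℕ × ℕ) : Prop := (e.1 < f.1 ∧ f.2 < e.2) ∨ (f.1 < e.1 ∧ e.2 < f.2)

/-- Two edges are separated: neither crossing nor nested. -/
def SeparatedPair (e f : ℕ × ℕ) : Prop := e.2 < f.1 ∨ f.2 < e.1

/-- `e` and `f` are the last two edges of `s`: the two edges whose smaller elements (first
coordinates) are the two largest among the smaller elements of all edges. -/
def AreLastTwo (s : Finset (ℕ × ℕ)) (e f : ℕ × ℕ) : Prop :=
  e ∈ s ∧ f ∈ s ∧ e ≠ f ∧ ∀ g ∈ s, g ≠ e → g ≠ f → g.1 < e.1 ∧ g.1 < f.1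

namespace CN

/-- shift map for inserting a last edge with `u` old points after the opener and
`v` old points after the closer. -/
def sig (N u v p : ℕ) : ℕ := if p ≤ N - u then p else if p ≤ N - v then p + 1 else p + 2

/-- inverse shift, removing the points `o < c`. -/
def tau (o c p : ℕ) : ℕ := if p < o then p else if p < c then p - 1 else p - 2

def sigE (N u v : ℕ) (e : ℕ × ℕ) : ℕ × ℕ := (sig N u v e.1, sig N u v e.2)

def tauE (o c : ℕ) (e : ℕ × ℕ) : ℕ × ℕ := (tau o c e.1, tau o c e.2)

def addLastE (m u v : ℕ) (s : Finset (ℕ × ℕ)) : Finset (ℕ × ℕ) :=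
  insert (2*m+1-u, 2*m+2-v) (s.image (sigE (2*m) u v))

def lastOp (M : Finset (ℕ × ℕ)) : ℕ := M.sup Prod.fst

def lastCl (M : Finset (ℕ × ℕ)) : ℕ := M.sup fun e => if e.1 = lastOp M then e.2 else 0

def strip (M : Finset (ℕ × ℕ)) : Finset (ℕ × ℕ) :=
  (M.erase (lastOp M, lastCl M)).image (tauE (lastOp M) (lastCl M))

def uOf (M : Finset (ℕ × ℕ)) : ℕ := 2*M.card - 1 - lastOp M

def vOf (M : Finset (ℕ × ℕ)) : ℕ := 2*M.card - lastCl M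

def psi : ℕ → Finset (ℕ × ℕ) → Finset (ℕ × ℕ)
  | 0, s => s
  | m+1, M => addLastE m (uOf M) (uOf M - vOf M) (psi m (strip M))

/-- validity of insertion data. -/
def Valid (m u v : ℕ) (s : Finset (ℕ × ℕ)) : Prop :=
  IsMatching m s ∧ v ≤ u ∧ u + lastOp s ≤ 2*m

section arith

variable {N u v o c p q : ℕ}

lemma sig_mono (huv : v ≤ u) (h : p < q) : sig N u v p < sig N u v q := by
  unfold sig; split_ifs <;> omega

lemma sig_le (hp : p ≤ N - u) : sig N u v p = p := by unfold sig; split_ifs <;> omega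

lemma tau_sig (huv : v ≤ u) (hu : u ≤ N) (hp : p ≤ N) :
    tau (N+1-u) (N+2-v) (sig N u v p) = p := by
  unfold sig tau; split_ifs <;> omega

lemma sig_tau (huv : v ≤ u) (hu : u ≤ N) (hp : p ≤ N + 2)
    (h1 : p ≠ N+1-u) (h2 : p ≠ N+2-v) : sig N u v (tau (N+1-u) (N+2-v) p) = p := by
  unfold sig tau; split_ifs <;> omega

lemma sig_ne_o (huv : v ≤ u) (hu : u ≤ N) (hp : p ≤ N) : sig N u v p ≠ N+1-u := by
  unfold sig; split_ifs <;> omega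

lemma sig_ne_c (huv : v ≤ u) (hu : u ≤ N) (hp : p ≤ N) : sig N u v p ≠ N+2-v := by
  unfold sig; split_ifs <;> omega

lemma sig_bounds (huv : v ≤ u) (hp1 : 1 ≤ p) (hp : p ≤ N) :
    1 ≤ sig N u v p ∧ sig N u v p ≤ N + 2 := by
  unfold sig; split_ifs <;> omega

end arith

section prodcount

variable {α : Type*} [DecidableEq α]

lemma card_filter_prod_insert {a : α} {t : Finset α} (ha : a ∉ t)
    (P : α × α → Prop) [DecidablePred P] :
    (((insert a t) ×ˢ (insert a t)).filter P).card =
      ((t ×ˢ t).filter P).card + (t.filter fun e => P (a, e)).card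
        + (t.filter fun e => P (e, a)).card + (if P (a,a) then 1 else 0) := by
  have hset : (insert a t) ×ˢ (insert a t)
      = insert (a,a) ((t.image (fun e => (a, e)) ∪ t.image (fun e => (e, a))) ∪ t ×ˢ t) := by
    ext ⟨x, y⟩
    simp only [Finset.mem_product, Finset.mem_insert, Finset.mem_union, Finset.mem_image,
      Prod.mk.injEq]
    constructor
    · rintro ⟨hx | hx, hy | hy⟩ <;> subst_vars
      · tauto
      · exact Or.inr (Or.inl (Or.inl ⟨y, hy, rfl, rfl⟩))
      · exact Or.inr (Or.inl (Or.inr ⟨x, hx, rfl, rfl⟩))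
      · tauto
    · rintro (⟨rfl, rfl⟩ | (⟨e, he, rfl, rfl⟩ | ⟨e, he, rfl, rfl⟩) | ⟨hx, hy⟩) <;> tauto
  have hmem : (a, a) ∉ ((t.image (fun e => (a, e)) ∪ t.image (fun e => (e, a))) ∪ t ×ˢ t) := by
    simp only [Finset.mem_union, Finset.mem_image, Finset.mem_product, Prod.mk.injEq]
    rintro ((⟨e, he, -, rfl⟩ | ⟨e, he, rfl, -⟩) | ⟨h, -⟩) <;> exact ha ‹_›
  have hd1 : Disjoint (t.image (fun e => (a, e))) (t.image (fun e => (e, a))) := by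
    simp only [Finset.disjoint_left, Finset.mem_image]
    rintro p ⟨e, he, rfl⟩ ⟨f, hf, hp⟩
    obtain ⟨rfl, rfl⟩ := Prod.mk_inj.mp hp
    exact ha hf
  have hd2 : Disjoint ((t.image (fun e => (a, e)) ∪ t.image (fun e => (e, a)))) (t ×ˢ t) := by
    simp only [Finset.disjoint_left, Finset.mem_union, Finset.mem_image, Finset.mem_product]
    rintro p (⟨e, he, rfl⟩ | ⟨e, he, rfl⟩) hp
    · exact ha hp.1
    · exact ha hp.2
  have hcard : ((((t.image (fun e => (a, e)) ∪ t.image (fun e => (e, a))) ∪ t ×ˢ t)).filter P).card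
      = ((t ×ˢ t).filter P).card + (t.filter fun e => P (a, e)).card
        + (t.filter fun e => P (e, a)).card := by
    rw [Finset.filter_union,
      Finset.card_union_of_disjoint (Finset.disjoint_filter_filter hd2),
      Finset.filter_union,
      Finset.card_union_of_disjoint (Finset.disjoint_filter_filter hd1),
      Finset.filter_image, Finset.filter_image,
      Finset.card_image_of_injective _ (fun x y h => (Prod.mk_inj.mp h).2),
      Finset.card_image_of_injective _ (fun x y h => (Prod.mk_inj.mp h).1)]
    ring
  rw [hset, Finset.filter_insert]
  split_ifs with hP
  · rw [Finset.card_insert_of_notMem (fun h => hmem (Finset.mem_filter.mp h).1), hcard]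
  · rw [hcard, Nat.add_zero]

lemma prod_image_eq {β : Type*} [DecidableEq β] (s : Finset α) (f : α → β) :
    (s.image f) ×ˢ (s.image f) = (s ×ˢ s).image (Prod.map f f) := by
  ext ⟨x, y⟩
  simp only [Finset.mem_product, Finset.mem_image, Finset.mem_product, Prod.ext_iff, Prod.map]
  constructor
  · rintro ⟨⟨d, hd, rfl⟩, ⟨d', hd', rfl⟩⟩; exact ⟨(d, d'), ⟨hd, hd'⟩, rfl, rfl⟩
  · rintro ⟨⟨d, d'⟩, ⟨hd, hd'⟩, rfl, rfl⟩; exact ⟨⟨d, hd, rfl⟩, ⟨d', hd', rfl⟩⟩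

lemma card_filter_prod_image {β : Type*} [DecidableEq β] (s : Finset α) (f : α → β)
    (hf : Set.InjOn f s) (P : β × β → Prop) [DecidablePred P]
    (Q : α × α → Prop) [DecidablePred Q]
    (hPQ : ∀ d ∈ s, ∀ d' ∈ s, (P (f d, f d') ↔ Q (d, d'))) :
    (((s.image f) ×ˢ (s.image f)).filter P).card = ((s ×ˢ s).filter Q).card := by
  rw [prod_image_eq, Finset.filter_image]
  rw [Finset.card_image_of_injOn]
  · congr 1
    apply Finset.filter_congr
    intro ⟨d, d'⟩ hd
    rw [Finset.mem_product] at hd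
    simpa using hPQ d hd.1 d' hd.2
  · intro ⟨d, d'⟩ hd ⟨e, e'⟩ he hde
    simp only [Finset.mem_coe, Finset.mem_filter, Finset.mem_product] at hd he
    obtain ⟨h1, h2⟩ := Prod.mk_inj.mp hde
    exact Prod.ext (hf hd.1.1 he.1.1 h1) (hf hd.1.2 he.1.2 h2)

end prodcount

section matching

variable {m u v : ℕ} {s M : Finset (ℕ × ℕ)}

lemma vertex_exists (h : IsMatching m s) {w : ℕ} (h1 : 1 ≤ w) (h2 : w ≤ 2*m) :
    ∃ e ∈ s, w = e.1 ∨ w = e.2 := by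
  obtain ⟨e, ⟨he, hw⟩, -⟩ := h.2.2 w h1 h2
  exact ⟨e, he, hw⟩

lemma vertex_unique (h : IsMatching m s) {w : ℕ} (h1 : 1 ≤ w) (h2 : w ≤ 2*m)
    {e f : ℕ × ℕ} (he : e ∈ s) (hf : f ∈ s)
    (hwe : w = e.1 ∨ w = e.2) (hwf : w = f.1 ∨ w = f.2) : e = f := by
  obtain ⟨g, -, hu⟩ := h.2.2 w h1 h2
  rw [hu e ⟨he, hwe⟩, hu f ⟨hf, hwf⟩]

/-- The number of edges of a matching whose closer lies in `(A, B]`, provided all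
openers are `≤ A`. -/
lemma card_closers_Ioc (h : IsMatching m s) {A B : ℕ} (hop : ∀ e ∈ s, e.1 ≤ A)
    (hAB : A ≤ B) (hB : B ≤ 2*m) :
    (s.filter fun e => A < e.2 ∧ e.2 ≤ B).card = B - A := by
  have : (s.filter fun e => A < e.2 ∧ e.2 ≤ B).card = (Finset.Ioc A B).card := by
    apply Finset.card_bij (fun e _ => e.2)
    · intro e he
      rw [Finset.mem_filter] at he
      exact Finset.mem_Ioc.mpr he.2
    · intro e he f hf hef
      rw [Finset.mem_filter] at he hf
      have h1 : 1 ≤ e.2 := le_trans (Nat.one_le_iff_ne_zero.mpr ?_) le_rfl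
      · exact vertex_unique h h1 (le_trans he.2.2 hB) he.1 hf.1 (Or.inr rfl) (Or.inr hef)
      · have := (h.2.1 e he.1).2.1; have := (h.2.1 e he.1).1; omega
    · intro w hw
      rw [Finset.mem_Ioc] at hw
      have h1 : 1 ≤ w := by omega
      obtain ⟨e, he, hwe⟩ := vertex_exists h h1 (le_trans hw.2 hB)
      have hw2 : w = e.2 := by
        rcases hwe with h' | h'
        · exact absurd (h' ▸ hop e he) (by omega)
        · exact h'
      exact ⟨e, Finset.mem_filter.mpr ⟨he, by omega⟩, hw2.symm⟩
  rw [this, Nat.card_Ioc]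

end matching

section addLast

variable {m u v : ℕ} {s M : Finset (ℕ × ℕ)}

lemma sig_injective {N u v : ℕ} : Function.Injective (sig N u v) := by
  intro p q h
  by_contra hne
  rcases Nat.lt_or_ge p q with h' | h'
  · have : sig N u v p < sig N u v q := by unfold sig; split_ifs <;> omega
    omega
  · have hq : q < p := by omega
    have : sig N u v q < sig N u v p := by unfold sig; split_ifs <;> omega
    omega

lemma sigE_injOn {N u v : ℕ} {s : Finset (ℕ × ℕ)} : Set.InjOn (sigE N u v) s := by
  intro e _ f _ h
  obtain ⟨h1, h2⟩ := Prod.mk_inj.mp h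
  exact Prod.ext (sig_injective h1) (sig_injective h2)

lemma valid_op_le (hV : Valid m u v s) : ∀ e ∈ s, e.1 + u ≤ 2*m := by
  intro e he
  have : e.1 ≤ lastOp s := Finset.le_sup (f := Prod.fst) he
  have := hV.2.2
  omega

lemma valid_u_le (hV : Valid m u v s) : u ≤ 2*m := by have := hV.2.2; omega

lemma new_not_mem_image (hV : Valid m u v s) :
    (2*m+1-u, 2*m+2-v) ∉ s.image (sigE (2*m) u v) := by
  rw [Finset.mem_image]
  rintro ⟨e, he, hh⟩
  have hop := valid_op_le hV e he
  have h1 : sig (2*m) u v e.1 = 2*m+1-u := (Prod.mk_inj.mp hh).1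
  rw [sig_le (by omega)] at h1
  have := valid_u_le hV
  omega

lemma card_addLastE (hV : Valid m u v s) : (addLastE m u v s).card = m + 1 := by
  rw [addLastE, Finset.card_insert_of_notMem (new_not_mem_image hV),
    Finset.card_image_of_injOn sigE_injOn, hV.1.1]

lemma isMatching_addLastE (hV : Valid m u v s) : IsMatching (m+1) (addLastE m u v s) := by
  obtain ⟨hm, huv, hlo⟩ := hV
  have hu2m : u ≤ 2*m := by omega
  refine ⟨card_addLastE ⟨hm, huv, hlo⟩, ?_, ?_⟩
  · rintro e he
    rw [addLastE, Finset.mem_insert] at he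
    rcases he with rfl | he
    · exact ⟨show 2*m+1-u < 2*m+2-v by omega, show 1 ≤ 2*m+1-u by omega,
        show 2*m+2-v ≤ 2*(m+1) by omega⟩
    · obtain ⟨d, hd, rfl⟩ := Finset.mem_image.mp he
      obtain ⟨hlt, h1, h2⟩ := hm.2.1 d hd
      refine ⟨sig_mono huv hlt, (sig_bounds huv h1 (by omega)).1, ?_⟩
      have := (sig_bounds huv (by omega : 1 ≤ d.2) h2).2
      show sig (2*m) u v d.2 ≤ 2*(m+1)
      omega
  · intro w hw1 hw2
    by_cases hwoc : w = 2*m+1-u ∨ w = 2*m+2-v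
    · refine ⟨(2*m+1-u, 2*m+2-v), ⟨Finset.mem_insert_self _ _, by simpa using hwoc⟩, ?_⟩
      rintro f ⟨hf, hwf⟩
      rw [addLastE, Finset.mem_insert] at hf
      rcases hf with rfl | hf
      · rfl
      · exfalso
        obtain ⟨d, hd, rfl⟩ := Finset.mem_image.mp hf
        obtain ⟨hlt, h1, h2⟩ := hm.2.1 d hd
        rcases hwf with h | h <;> rcases hwoc with h' | h'
        · exact sig_ne_o huv hu2m (by omega : d.1 ≤ 2*m) (h.symm.trans h')
        · exact sig_ne_c huv hu2m (by omega : d.1 ≤ 2*m) (h.symm.trans h')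
        · exact sig_ne_o huv hu2m (h2 : d.2 ≤ 2*m) (h.symm.trans h')
        · exact sig_ne_c huv hu2m (h2 : d.2 ≤ 2*m) (h.symm.trans h')
    · push_neg at hwoc
      obtain ⟨hno, hnc⟩ := hwoc
      have htb : 1 ≤ tau (2*m+1-u) (2*m+2-v) w ∧ tau (2*m+1-u) (2*m+2-v) w ≤ 2*m := by
        unfold tau; split_ifs <;> omega
      obtain ⟨e, he, hwe⟩ := vertex_exists hm htb.1 htb.2
      have hst : sig (2*m) u v (tau (2*m+1-u) (2*m+2-v) w) = w :=
        sig_tau huv hu2m (by omega) hno hnc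
      refine ⟨sigE (2*m) u v e, ⟨Finset.mem_insert_of_mem (Finset.mem_image_of_mem _ he), ?_⟩, ?_⟩
      · rcases hwe with h | h
        · exact Or.inl (h ▸ hst).symm
        · exact Or.inr (h ▸ hst).symm
      · rintro f ⟨hf, hwf⟩
        rw [addLastE, Finset.mem_insert] at hf
        rcases hf with rfl | hf
        · exact absurd hwf (by rintro (h | h) <;> [exact hno h; exact hnc h])
        obtain ⟨d, hd, rfl⟩ := Finset.mem_image.mp hf
        have hwd : tau (2*m+1-u) (2*m+2-v) w = d.1 ∨ tau (2*m+1-u) (2*m+2-v) w = d.2 := by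
          rcases hwf with h | h
          · exact Or.inl (sig_injective (hst.trans h))
          · exact Or.inr (sig_injective (hst.trans h))
        rw [vertex_unique hm htb.1 htb.2 hd he hwd hwe]

lemma lastOp_addLastE (hV : Valid m u v s) : lastOp (addLastE m u v s) = 2*m+1-u := by
  have hu2m := valid_u_le hV
  apply le_antisymm
  · apply Finset.sup_le
    intro e he
    rw [addLastE, Finset.mem_insert] at he
    rcases he with rfl | he
    · exact le_rfl
    · obtain ⟨d, hd, rfl⟩ := Finset.mem_image.mp he
      have hop := valid_op_le hV d hd
      show sig (2*m) u v d.1 ≤ 2*m+1-u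
      rw [sig_le (by omega)]
      omega
  · have : ((2*m+1-u : ℕ), (2*m+2-v : ℕ)) ∈ addLastE m u v s := Finset.mem_insert_self _ _
    exact Finset.le_sup (s := addLastE m u v s) (f := Prod.fst) this

lemma lastCl_addLastE (hV : Valid m u v s) : lastCl (addLastE m u v s) = 2*m+2-v := by
  have hu2m := valid_u_le hV
  have huv := hV.2.1
  rw [lastCl, lastOp_addLastE hV]
  apply le_antisymm
  · apply Finset.sup_le
    intro e he
    rw [addLastE, Finset.mem_insert] at he
    rcases he with rfl | he
    · simp
    · obtain ⟨d, hd, rfl⟩ := Finset.mem_image.mp he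
      have hop := valid_op_le hV d hd
      have : sig (2*m) u v d.1 = d.1 := sig_le (by omega)
      have hne : (sigE (2*m) u v d).1 ≠ 2*m+1-u := by
        show sig (2*m) u v d.1 ≠ 2*m+1-u
        omega
      simp [hne]
  · have : ((2*m+1-u : ℕ), (2*m+2-v : ℕ)) ∈ addLastE m u v s := Finset.mem_insert_self _ _
    have h := Finset.le_sup (s := addLastE m u v s)
      (f := fun e : ℕ × ℕ => if e.1 = 2*m+1-u then e.2 else 0) this
    simpa using h

lemma uOf_addLastE (hV : Valid m u v s) : uOf (addLastE m u v s) = u := by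
  have := valid_u_le hV
  rw [uOf, card_addLastE hV, lastOp_addLastE hV]
  omega

lemma vOf_addLastE (hV : Valid m u v s) : vOf (addLastE m u v s) = v := by
  have := valid_u_le hV
  have := hV.2.1
  rw [vOf, card_addLastE hV, lastCl_addLastE hV]
  omega

lemma strip_addLastE (hV : Valid m u v s) : strip (addLastE m u v s) = s := by
  have hu2m := valid_u_le hV
  have huv := hV.2.1
  rw [strip, lastOp_addLastE hV, lastCl_addLastE hV, addLastE,
    Finset.erase_insert (new_not_mem_image hV), Finset.image_image]
  have heq : ∀ e ∈ s, tauE (2*m+1-u) (2*m+2-v) (sigE (2*m) u v e) = e := by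
    intro e he
    obtain ⟨hlt, h1, h2⟩ := hV.1.2.1 e he
    have hop := valid_op_le hV e he
    exact Prod.ext (tau_sig huv hu2m (by omega)) (tau_sig huv hu2m (by omega))
  rw [show ((tauE (2*m+1-u) (2*m+2-v)) ∘ (sigE (2*m) u v)) =
    fun e => tauE (2*m+1-u) (2*m+2-v) (sigE (2*m) u v e) from rfl]
  calc s.image (fun e => tauE (2*m+1-u) (2*m+2-v) (sigE (2*m) u v e))
      = s.image id := Finset.image_congr heq
    _ = s := Finset.image_id

lemma sig_lt_iff {N u v x y : ℕ} : sig N u v x < sig N u v y ↔ x < y := by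
  unfold sig; split_ifs <;> omega

lemma crStat_addLastE (hV : Valid m u v s) :
    crStat (addLastE m u v s) = crStat s + (u - v) := by
  have hu2m := valid_u_le hV
  have huv := hV.2.1
  rw [addLastE, crStat, card_filter_prod_insert (new_not_mem_image hV)]
  have h0 : ¬ ((2*m+1-u, 2*m+2-v).1 < (2*m+1-u, 2*m+2-v).1 ∧ _root_.True) := by simp
  have e1 : ((s.image (sigE (2*m) u v)).filter fun e =>
      (2*m+1-u, 2*m+2-v).1 < e.1 ∧ e.1 < (2*m+1-u, 2*m+2-v).2 ∧ (2*m+1-u, 2*m+2-v).2 < e.2)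
      = ∅ := by
    rw [Finset.filter_image, Finset.image_eq_empty, Finset.filter_eq_empty_iff]
    intro d hd
    have hop := valid_op_le hV d hd
    have : sig (2*m) u v d.1 = d.1 := sig_le (by omega)
    show ¬ (2*m+1-u < sig (2*m) u v d.1 ∧ _)
    rintro ⟨h, -⟩
    omega
  have e2 : ((s.image (sigE (2*m) u v)).filter fun e =>
      e.1 < (2*m+1-u, 2*m+2-v).1 ∧ (2*m+1-u, 2*m+2-v).1 < e.2 ∧ e.2 < (2*m+1-u, 2*m+2-v).2).card
      = u - v := by
    rw [Finset.filter_image, Finset.card_image_of_injOn (sigE_injOn.mono (by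
      intro x hx; exact (Finset.mem_filter.mp hx).1))]
    rw [show (s.filter fun d => (sigE (2*m) u v d).1 < (2*m+1-u, 2*m+2-v).1 ∧
        (2*m+1-u, 2*m+2-v).1 < (sigE (2*m) u v d).2 ∧ (sigE (2*m) u v d).2 < (2*m+1-u, 2*m+2-v).2)
      = s.filter fun d => 2*m-u < d.2 ∧ d.2 ≤ 2*m-v from ?_]
    · have h := card_closers_Ioc hV.1 (A := 2*m-u) (B := 2*m-v)
        (fun e he => by have := valid_op_le hV e he; omega) (by omega) (by omega)
      rw [h]
      omega
    · apply Finset.filter_congr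
      intro d hd
      obtain ⟨hlt, h1, h2⟩ := hV.1.2.1 d hd
      have hop := valid_op_le hV d hd
      have hd1 : sig (2*m) u v d.1 = d.1 := sig_le (by omega)
      show ((sig (2*m) u v d.1 < 2*m+1-u ∧ 2*m+1-u < sig (2*m) u v d.2 ∧
        sig (2*m) u v d.2 < 2*m+2-v) ↔ _)
      rw [hd1]
      unfold sig
      split_ifs <;> omega
  have e3 : (((s.image (sigE (2*m) u v)) ×ˢ (s.image (sigE (2*m) u v))).filter fun p =>
      p.1.1 < p.2.1 ∧ p.2.1 < p.1.2 ∧ p.1.2 < p.2.2).card = crStat s := by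
    rw [crStat]
    apply card_filter_prod_image _ _ sigE_injOn
    intro d _ d' _
    show ((sig _ u v d.1 < sig _ u v d'.1 ∧ sig _ u v d'.1 < sig _ u v d.2 ∧
        sig _ u v d.2 < sig _ u v d'.2) ↔ _)
    rw [sig_lt_iff, sig_lt_iff, sig_lt_iff]
  rw [e3]
  rw [e1]
  rw [e2]
  simp only [Finset.card_empty]
  have : ¬ ((2*m+1-u : ℕ) < 2*m+1-u ∧ (2*m+1-u : ℕ) < 2*m+2-v ∧ (2*m+2-v:ℕ) < 2*m+2-v) := by
    omega
  rw [if_neg this]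
  omega

lemma neStat_addLastE (hV : Valid m u v s) :
    neStat (addLastE m u v s) = neStat s + v := by
  have hu2m := valid_u_le hV
  have huv := hV.2.1
  rw [addLastE, neStat, card_filter_prod_insert (new_not_mem_image hV)]
  have e1 : ((s.image (sigE (2*m) u v)).filter fun e =>
      (2*m+1-u, 2*m+2-v).1 < e.1 ∧ e.2 < (2*m+1-u, 2*m+2-v).2) = ∅ := by
    rw [Finset.filter_image, Finset.image_eq_empty, Finset.filter_eq_empty_iff]
    intro d hd
    have hop := valid_op_le hV d hd
    have : sig (2*m) u v d.1 = d.1 := sig_le (by omega)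
    show ¬ (2*m+1-u < sig (2*m) u v d.1 ∧ _)
    rintro ⟨h, -⟩
    omega
  have e2 : ((s.image (sigE (2*m) u v)).filter fun e =>
      e.1 < (2*m+1-u, 2*m+2-v).1 ∧ (2*m+1-u, 2*m+2-v).2 < e.2).card = v := by
    rw [Finset.filter_image, Finset.card_image_of_injOn (sigE_injOn.mono (by
      intro x hx; exact (Finset.mem_filter.mp hx).1))]
    rw [show (s.filter fun d => (sigE (2*m) u v d).1 < (2*m+1-u, 2*m+2-v).1 ∧
        (2*m+1-u, 2*m+2-v).2 < (sigE (2*m) u v d).2)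
      = s.filter fun d => 2*m-v < d.2 ∧ d.2 ≤ 2*m from ?_]
    · have := card_closers_Ioc hV.1 (A := 2*m-v) (B := 2*m)
        (fun e he => by have := valid_op_le hV e he; omega) (by omega) (by omega)
      rw [this]
      omega
    · apply Finset.filter_congr
      intro d hd
      obtain ⟨hlt, h1, h2⟩ := hV.1.2.1 d hd
      have hop := valid_op_le hV d hd
      have hd1 : sig (2*m) u v d.1 = d.1 := sig_le (by omega)
      show ((sig (2*m) u v d.1 < 2*m+1-u ∧ 2*m+2-v < sig (2*m) u v d.2) ↔ _)
      rw [hd1]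
      unfold sig
      split_ifs <;> omega
  have e3 : (((s.image (sigE (2*m) u v)) ×ˢ (s.image (sigE (2*m) u v))).filter fun p =>
      p.1.1 < p.2.1 ∧ p.2.2 < p.1.2).card = neStat s := by
    rw [neStat]
    apply card_filter_prod_image _ _ sigE_injOn
    intro d _ d' _
    show ((sig _ u v d.1 < sig _ u v d'.1 ∧ sig _ u v d'.2 < sig _ u v d.2) ↔ _)
    rw [sig_lt_iff, sig_lt_iff]
  rw [e3, e1, e2]
  simp only [Finset.card_empty]
  have : ¬ ((2*m+1-u : ℕ) < 2*m+1-u ∧ (2*m+2-v:ℕ) < 2*m+2-v) := by omega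
  rw [if_neg this]
  omega

end addLast

section decompose

variable {m : ℕ} {M : Finset (ℕ × ℕ)}

lemma lastEdge_mem (h : IsMatching (m+1) M) : (lastOp M, lastCl M) ∈ M := by
  have hne : M.Nonempty := Finset.card_pos.mp (by rw [h.1]; omega)
  obtain ⟨e₀, he₀, hsup⟩ := Finset.exists_mem_eq_sup M hne Prod.fst
  have ho : lastOp M = e₀.1 := hsup
  have hcl : lastCl M = e₀.2 := by
    rw [lastCl]
    apply le_antisymm
    · apply Finset.sup_le
      intro e he
      by_cases h' : e.1 = lastOp M
      · have h1 : (1:ℕ) ≤ e₀.1 := (h.2.1 e₀ he₀).2.1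
        have h2 : e₀.1 ≤ 2*(m+1) := le_trans (le_of_lt (h.2.1 e₀ he₀).1) (h.2.1 e₀ he₀).2.2
        have : e = e₀ := vertex_unique h (w := lastOp M) (by omega) (by omega) he he₀
          (Or.inl h'.symm) (Or.inl ho)
        rw [this]
        split_ifs <;> omega
      · simp [h']
    · have := Finset.le_sup (s := M) (f := fun e : ℕ × ℕ => if e.1 = lastOp M then e.2 else 0) he₀
      simpa [← ho] using this
  rw [ho, hcl]
  exact (by simpa using he₀ : (e₀.1, e₀.2) ∈ M)

lemma lastEdge_facts (h : IsMatching (m+1) M) :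
    1 ≤ lastOp M ∧ lastOp M < lastCl M ∧ lastCl M ≤ 2*m+2 ∧
      ∀ e ∈ M, e ≠ (lastOp M, lastCl M) →
        e.1 < lastOp M ∧ e.1 ≠ lastCl M ∧ e.2 ≠ lastOp M ∧ e.2 ≠ lastCl M ∧
          1 ≤ e.1 ∧ e.1 < e.2 ∧ e.2 ≤ 2*m+2 := by
  have hmem := lastEdge_mem h
  obtain ⟨hlt, h1, h2⟩ := h.2.1 _ hmem
  refine ⟨h1, hlt, by omega, ?_⟩
  intro e he hne
  obtain ⟨hlt', h1', h2'⟩ := h.2.1 _ he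
  have hbo : 1 ≤ lastOp M ∧ lastOp M ≤ 2*(m+1) := ⟨h1, by simp at h2 ⊢; omega⟩
  have hbc : 1 ≤ lastCl M ∧ lastCl M ≤ 2*(m+1) := ⟨by simp at hlt; omega, by simpa using h2⟩
  have hop : e.1 ≤ lastOp M := Finset.le_sup (f := Prod.fst) he
  constructor
  · rcases Nat.lt_or_ge e.1 (lastOp M) with h' | h'
    · exact h'
    · exfalso
      have : e.1 = lastOp M := by omega
      exact hne (vertex_unique h hbo.1 hbo.2 he hmem (Or.inl this.symm) (Or.inl rfl))
  refine ⟨?_, ?_, ?_, h1', hlt', by omega⟩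
  · intro h'
    exact hne (vertex_unique h hbc.1 hbc.2 he hmem (Or.inl h'.symm) (Or.inr rfl))
  · intro h'
    have := vertex_unique h hbo.1 hbo.2 he hmem (Or.inr h'.symm) (Or.inl rfl)
    rw [this] at h'
    simp at h'
    omega
  · intro h'
    exact hne (vertex_unique h hbc.1 hbc.2 he hmem (Or.inr h'.symm) (Or.inr rfl))

lemma uv_facts (h : IsMatching (m+1) M) :
    lastOp M = 2*m+1 - uOf M ∧ lastCl M = 2*m+2 - vOf M ∧ vOf M ≤ uOf M ∧ uOf M ≤ 2*m := by
  obtain ⟨h1, hlt, h2, -⟩ := lastEdge_facts h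
  rw [uOf, vOf, h.1]
  omega

lemma erase_coords (h : IsMatching (m+1) M) :
    ∀ e ∈ M.erase (lastOp M, lastCl M),
      1 ≤ e.1 ∧ e.1 < e.2 ∧ e.2 ≤ 2*m+2 ∧ e.1 ≠ 2*m+1 - uOf M ∧ e.1 ≠ 2*m+2 - vOf M ∧
        e.2 ≠ 2*m+1 - uOf M ∧ e.2 ≠ 2*m+2 - vOf M ∧ e.1 < 2*m+1 - uOf M := by
  obtain ⟨ho, hc, huv, hu2m⟩ := uv_facts h
  obtain ⟨h1o, holt, hc2, hfacts⟩ := lastEdge_facts h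
  intro e he
  rw [Finset.mem_erase] at he
  obtain ⟨hlt, hne1, hne2, hne3, h1', hlt', h2'⟩ := hfacts e he.2 he.1
  refine ⟨h1', hlt', h2', ?_, ?_, ?_, ?_, ?_⟩ <;> omega

lemma strip_isMatching (h : IsMatching (m+1) M) : IsMatching m (strip M) := by
  obtain ⟨ho, hc, huv, hu2m⟩ := uv_facts h
  obtain ⟨h1o, holt, hc2, -⟩ := lastEdge_facts h
  have hmem := lastEdge_mem h
  have hco := erase_coords h
  have hst : ∀ p, p ≤ 2*m+2 → p ≠ 2*m+1 - uOf M → p ≠ 2*m+2 - vOf M →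
      sig (2*m) (uOf M) (vOf M) (tau (lastOp M) (lastCl M) p) = p := by
    intro p hp hp1 hp2
    rw [ho, hc]
    exact sig_tau huv hu2m hp hp1 hp2
  have hinj : Set.InjOn (tauE (lastOp M) (lastCl M)) (M.erase (lastOp M, lastCl M)) := by
    intro e he f hf hef
    obtain ⟨he1, he2, he3, he4, he5, he6, he7, -⟩ := hco e he
    obtain ⟨hf1, hf2, hf3, hf4, hf5, hf6, hf7, -⟩ := hco f hf
    obtain ⟨g1, g2⟩ := Prod.mk_inj.mp hef
    refine Prod.ext ?_ ?_
    · rw [← hst e.1 (by omega) he4 he5, ← hst f.1 (by omega) hf4 hf5, g1]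
    · rw [← hst e.2 (by omega) he6 he7, ← hst f.2 (by omega) hf6 hf7, g2]
  refine ⟨?_, ?_, ?_⟩
  · rw [strip, Finset.card_image_of_injOn hinj, Finset.card_erase_of_mem hmem, h.1]
    omega
  · rintro g hg
    rw [strip, Finset.mem_image] at hg
    obtain ⟨e, he, rfl⟩ := hg
    obtain ⟨he1, he2, he3, he4, he5, he6, he7, he8⟩ := hco e he
    refine ⟨?_, ?_, ?_⟩
    · show tau (lastOp M) (lastCl M) e.1 < tau (lastOp M) (lastCl M) e.2
      rw [ho, hc]; unfold tau; split_ifs <;> omega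
    · show 1 ≤ tau (lastOp M) (lastCl M) e.1
      rw [ho, hc]; unfold tau; split_ifs <;> omega
    · show tau (lastOp M) (lastCl M) e.2 ≤ 2*m
      rw [ho, hc]; unfold tau; split_ifs <;> omega
  · intro w hw1 hw2
    have hqb := sig_bounds (N := 2*m) (u := uOf M) (v := vOf M) huv hw1 hw2
    have hqo : sig (2*m) (uOf M) (vOf M) w ≠ 2*m+1 - uOf M := sig_ne_o huv hu2m hw2
    have hqc : sig (2*m) (uOf M) (vOf M) w ≠ 2*m+2 - vOf M := sig_ne_c huv hu2m hw2
    obtain ⟨e, he, hqe⟩ := vertex_exists h hqb.1 (by omega)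
    have hene : e ≠ (lastOp M, lastCl M) := by
      rintro rfl
      rcases hqe with h' | h'
      · exact hqo (h'.trans ho)
      · exact hqc (h'.trans hc)
    have he' : e ∈ M.erase (lastOp M, lastCl M) := Finset.mem_erase.mpr ⟨hene, he⟩
    have hts : tau (lastOp M) (lastCl M) (sig (2*m) (uOf M) (vOf M) w) = w := by
      rw [ho, hc]
      exact tau_sig huv hu2m hw2
    refine ⟨tauE (lastOp M) (lastCl M) e,
      ⟨Finset.mem_image_of_mem _ he', ?_⟩, ?_⟩
    · rcases hqe with h' | h'
      · exact Or.inl (h' ▸ hts).symm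
      · exact Or.inr (h' ▸ hts).symm
    · rintro g ⟨hg, hwg⟩
      rw [strip, Finset.mem_image] at hg
      obtain ⟨f, hf, rfl⟩ := hg
      obtain ⟨hf1, hf2, hf3, hf4, hf5, hf6, hf7, -⟩ := hco f hf
      have hfe : f = e := by
        apply vertex_unique h (w := sig (2*m) (uOf M) (vOf M) w) hqb.1 (by omega)
          (Finset.mem_erase.mp hf).2 he _ hqe
        rcases hwg with h' | h'
        · left
          have hw' : w = tau (lastOp M) (lastCl M) f.1 := h'
          rw [hw', hst f.1 (by omega) hf4 hf5]
        · right
          have hw' : w = tau (lastOp M) (lastCl M) f.2 := h'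
          rw [hw', hst f.2 (by omega) hf6 hf7]
      rw [hfe]

lemma strip_valid (h : IsMatching (m+1) M) : Valid m (uOf M) (vOf M) (strip M) := by
  obtain ⟨ho, hc, huv, hu2m⟩ := uv_facts h
  refine ⟨strip_isMatching h, huv, ?_⟩
  have hco := erase_coords h
  have : lastOp (strip M) ≤ 2*m - uOf M := by
    apply Finset.sup_le
    intro g hg
    rw [strip, Finset.mem_image] at hg
    obtain ⟨e, he, rfl⟩ := hg
    obtain ⟨he1, he2, he3, he4, he5, he6, he7, he8⟩ := hco e he
    show tau (lastOp M) (lastCl M) e.1 ≤ 2*m - uOf M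
    rw [ho, hc]; unfold tau; split_ifs <;> omega
  omega

lemma addLastE_strip (h : IsMatching (m+1) M) :
    addLastE m (uOf M) (vOf M) (strip M) = M := by
  obtain ⟨ho, hc, huv, hu2m⟩ := uv_facts h
  have hmem := lastEdge_mem h
  have hco := erase_coords h
  rw [addLastE, strip, Finset.image_image]
  have heq : ∀ e ∈ M.erase (lastOp M, lastCl M),
      (sigE (2*m) (uOf M) (vOf M) ∘ tauE (lastOp M) (lastCl M)) e = e := by
    intro e he
    obtain ⟨he1, he2, he3, he4, he5, he6, he7, he8⟩ := hco e he
    have hst : ∀ p, p ≤ 2*m+2 → p ≠ 2*m+1 - uOf M → p ≠ 2*m+2 - vOf M →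
        sig (2*m) (uOf M) (vOf M) (tau (lastOp M) (lastCl M) p) = p := by
      intro p hp hp1 hp2
      rw [ho, hc]
      exact sig_tau huv hu2m hp hp1 hp2
    exact Prod.ext (hst e.1 (by omega) he4 he5) (hst e.2 (by omega) he6 he7)
  calc insert (2*m+1 - uOf M, 2*m+2 - vOf M)
        ((M.erase (lastOp M, lastCl M)).image
          (sigE (2*m) (uOf M) (vOf M) ∘ tauE (lastOp M) (lastCl M)))
      = insert (lastOp M, lastCl M) ((M.erase (lastOp M, lastCl M)).image id) := by
        rw [Finset.image_congr heq]
        congr 1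
        exact Prod.ext ho.symm hc.symm
    _ = M := by rw [Finset.image_id, Finset.insert_erase hmem]

end decompose

section psi

lemma psi_succ (m : ℕ) (M : Finset (ℕ × ℕ)) :
    psi (m+1) M = addLastE m (uOf M) (uOf M - vOf M) (psi m (strip M)) := rfl

lemma psi_spec : ∀ m (s : Finset (ℕ × ℕ)), IsMatching m s →
    IsMatching m (psi m s) ∧ lastOp (psi m s) = lastOp s ∧
    crStat (psi m s) = neStat s ∧ neStat (psi m s) = crStat s ∧ psi m (psi m s) = s := by
  intro m
  induction m with
  | zero =>
    intro s hs
    have hempty : s = ∅ := Finset.card_eq_zero.mp hs.1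
    subst hempty
    refine ⟨hs, rfl, ?_, ?_, rfl⟩ <;> simp [crStat, neStat, psi]
  | succ m ih =>
    intro M hM
    have hV := strip_valid hM
    have hadd := addLastE_strip hM
    obtain ⟨ho, hc, huv, hu2m⟩ := uv_facts hM
    obtain ⟨ih1, ih2, ih3, ih4, ih5⟩ := ih _ (strip_isMatching hM)
    have hV' : Valid m (uOf M) (uOf M - vOf M) (psi m (strip M)) :=
      ⟨ih1, by omega, by rw [ih2]; exact hV.2.2⟩
    have hne := neStat_addLastE hV
    have hcr := crStat_addLastE hV
    rw [hadd] at hne hcr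
    refine ⟨?_, ?_, ?_, ?_, ?_⟩
    · rw [psi_succ]; exact isMatching_addLastE hV'
    · rw [psi_succ, lastOp_addLastE hV', ho]
    · rw [psi_succ, crStat_addLastE hV', ih3]; omega
    · rw [psi_succ, neStat_addLastE hV', ih4]; omega
    · rw [psi_succ, psi_succ, uOf_addLastE hV', vOf_addLastE hV', strip_addLastE hV', ih5]
      rw [show uOf M - (uOf M - vOf M) = vOf M from by omega]
      exact hadd

end psi

section lastTwo

variable {m a1 b1 a2 b2 : ℕ} {t : Finset (ℕ × ℕ)}

lemma nestedPair_comm {e f : ℕ × ℕ} (h : NestedPair e f) : NestedPair f e := by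
  unfold NestedPair at *; tauto

lemma separatedPair_comm {e f : ℕ × ℕ} (h : SeparatedPair e f) : SeparatedPair f e := by
  unfold SeparatedPair at *; tauto

lemma areLastTwo_pair_eq {s : Finset (ℕ × ℕ)} {e f e' f' : ℕ × ℕ}
    (h1 : AreLastTwo s e f) (h2 : AreLastTwo s e' f') :
    (e' = e ∧ f' = f) ∨ (e' = f ∧ f' = e) := by
  obtain ⟨he, hf, hef, hmax⟩ := h1
  obtain ⟨he', hf', hef', hmax'⟩ := h2
  have hA : e' = e ∨ e' = f := by
    by_contra hcon
    push_neg at hcon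
    have h1' := hmax e' he' hcon.1 hcon.2
    have hEf' : e = f' := by
      by_contra hef''
      have := hmax' e he (by rintro rfl; exact hcon.1 rfl) hef''
      omega
    have : f ≠ e' := by rintro rfl; exact hcon.2 rfl
    have : f ≠ f' := by rw [← hEf']; exact fun h => hef h.symm
    have := hmax' f hf ‹f ≠ e'› ‹f ≠ f'›
    omega
  rcases hA with rfl | rfl
  · left
    refine ⟨rfl, ?_⟩
    by_contra hff
    have h1' := hmax f' hf' (fun h => hef' h.symm) hff
    have h2' := hmax' f hf (fun h => hef h.symm) (fun h => hff h.symm)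
    omega
  · right
    refine ⟨rfl, ?_⟩
    by_contra hfe
    have h1' := hmax f' hf' (fun h => hfe h) (fun h => hef' h.symm)
    have h2' := hmax' e he (fun h => hef h) (fun h => hfe h.symm)
    omega

lemma valid2 (hv1 : Valid m a1 b1 t) (hb : b2 ≤ a2) (ha : a2 ≤ a1 + 1) :
    Valid (m+1) a2 b2 (addLastE m a1 b1 t) := by
  refine ⟨isMatching_addLastE hv1, hb, ?_⟩
  rw [lastOp_addLastE hv1]
  have := valid_u_le hv1
  omega

lemma lastTwo_char (hv1 : Valid m a1 b1 t) (hb : b2 ≤ a2) (ha : a2 ≤ a1 + 1) :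
    AreLastTwo (addLastE (m+1) a2 b2 (addLastE m a1 b1 t))
      (2*m+1-a1, sig (2*(m+1)) a2 b2 (2*m+2-b1)) (2*(m+1)+1-a2, 2*(m+1)+2-b2) ∧
    (NestedPair (2*m+1-a1, sig (2*(m+1)) a2 b2 (2*m+2-b1)) (2*(m+1)+1-a2, 2*(m+1)+2-b2)
      ↔ b1 < b2) ∧
    (SeparatedPair (2*m+1-a1, sig (2*(m+1)) a2 b2 (2*m+2-b1)) (2*(m+1)+1-a2, 2*(m+1)+2-b2)
      ↔ a2 ≤ b1) := by
  have hb1a1 := hv1.2.1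
  have ha12m := valid_u_le hv1
  have hv2 := valid2 hv1 hb ha
  have hE1eq : (2*m+1-a1, sig (2*(m+1)) a2 b2 (2*m+2-b1))
      = sigE (2*(m+1)) a2 b2 (2*m+1-a1, 2*m+2-b1) := by
    refine Prod.ext ?_ rfl
    show (2*m+1-a1 : ℕ) = sig (2*(m+1)) a2 b2 (2*m+1-a1)
    rw [sig_le (by omega)]
  refine ⟨⟨?_, ?_, ?_, ?_⟩, ?_, ?_⟩
  · rw [hE1eq, addLastE]
    exact Finset.mem_insert_of_mem (Finset.mem_image_of_mem _ (Finset.mem_insert_self _ _))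
  · rw [addLastE]
    exact Finset.mem_insert_self _ _
  · intro hcon
    have := (Prod.mk_inj.mp hcon).1
    omega
  · intro g hg hg1 hg2
    rw [addLastE, Finset.mem_insert] at hg
    rcases hg with rfl | hg
    · exact absurd rfl hg2
    obtain ⟨d, hd, rfl⟩ := Finset.mem_image.mp hg
    rw [addLastE, Finset.mem_insert] at hd
    rcases hd with rfl | hd
    · exact absurd hE1eq.symm hg1
    obtain ⟨x, hx, rfl⟩ := Finset.mem_image.mp hd
    have hop := valid_op_le hv1 x hx
    have hx1 : (sigE (2*m) a1 b1 x).1 = x.1 := sig_le (by omega)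
    have hgx : (sigE (2*(m+1)) a2 b2 (sigE (2*m) a1 b1 x)).1 = x.1 := by
      show sig (2*(m+1)) a2 b2 (sigE (2*m) a1 b1 x).1 = x.1
      rw [hx1]
      exact sig_le (by omega)
    constructor
    · show (sigE (2*(m+1)) a2 b2 (sigE (2*m) a1 b1 x)).1 < 2*m+1-a1
      rw [hgx]; omega
    · show (sigE (2*(m+1)) a2 b2 (sigE (2*m) a1 b1 x)).1 < 2*(m+1)+1-a2
      rw [hgx]; omega
  · show ((2*m+1-a1 < 2*(m+1)+1-a2 ∧ 2*(m+1)+2-b2 < sig (2*(m+1)) a2 b2 (2*m+2-b1)) ∨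
      (2*(m+1)+1-a2 < 2*m+1-a1 ∧ sig (2*(m+1)) a2 b2 (2*m+2-b1) < 2*(m+1)+2-b2)) ↔ b1 < b2
    unfold sig
    split_ifs <;> omega
  · show (sig (2*(m+1)) a2 b2 (2*m+2-b1) < 2*(m+1)+1-a2 ∨
      2*(m+1)+2-b2 < 2*m+1-a1) ↔ a2 ≤ b1
    unfold sig
    split_ifs <;> omega

lemma lastTwo_cond (hv1 : Valid m a1 b1 t) (hb : b2 ≤ a2) (ha : a2 ≤ a1 + 1) :
    ((∃ e f, AreLastTwo (addLastE (m+1) a2 b2 (addLastE m a1 b1 t)) e f ∧ NestedPair e f)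
        ↔ b1 < b2) ∧
    ((∃ e f, AreLastTwo (addLastE (m+1) a2 b2 (addLastE m a1 b1 t)) e f ∧ SeparatedPair e f)
        ↔ a2 ≤ b1) := by
  obtain ⟨hlt, hN, hS⟩ := lastTwo_char hv1 hb ha
  constructor
  · constructor
    · rintro ⟨e, f, hlt', hn⟩
      rcases areLastTwo_pair_eq hlt' hlt with ⟨rfl, rfl⟩ | ⟨rfl, rfl⟩
      · exact hN.mp hn
      · exact hN.mp (nestedPair_comm hn)
    · intro h
      exact ⟨_, _, hlt, hN.mpr h⟩
  · constructor
    · rintro ⟨e, f, hlt', hs⟩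
      rcases areLastTwo_pair_eq hlt' hlt with ⟨rfl, rfl⟩ | ⟨rfl, rfl⟩
      · exact hS.mp hs
      · exact hS.mp (separatedPair_comm hs)
    · intro h
      exact ⟨_, _, hlt, hS.mpr h⟩

end lastTwo

section main

variable {m : ℕ} {M : Finset (ℕ × ℕ)}

def fwdT (m : ℕ) (M : Finset (ℕ × ℕ)) : Finset (ℕ × ℕ) :=
  addLastE (m+1) (uOf M - vOf (strip M) - 1) (uOf M - vOf M)
    (addLastE m (uOf (strip M)) (uOf (strip M) - vOf (strip M)) (psi m (strip (strip M))))

def bwdT (m : ℕ) (M : Finset (ℕ × ℕ)) : Finset (ℕ × ℕ) :=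
  addLastE (m+1) (uOf M + (uOf (strip M) - vOf (strip M)) + 1)
    (uOf M + (uOf (strip M) - vOf (strip M)) + 1 - vOf M)
    (addLastE m (uOf (strip M)) (uOf (strip M) - vOf (strip M)) (psi m (strip (strip M))))

lemma fwd_spec (hM : IsMatching (m+2) M)
    (hN : ∃ e f, AreLastTwo M e f ∧ NestedPair e f) :
    IsMatching (m+2) (fwdT m M) ∧ neStat (fwdT m M) = crStat M ∧
    (∃ e f, AreLastTwo (fwdT m M) e f ∧ SeparatedPair e f) ∧ bwdT m (fwdT m M) = M := by
  have hM1 : IsMatching (m+1) (strip M) := strip_isMatching hM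
  have hVt : Valid m (uOf (strip M)) (vOf (strip M)) (strip (strip M)) := strip_valid hM1
  have hV1 : Valid (m+1) (uOf M) (vOf M) (strip M) := strip_valid hM
  have hs1 : addLastE m (uOf (strip M)) (vOf (strip M)) (strip (strip M)) = strip M :=
    addLastE_strip hM1
  have hs2 : addLastE (m+1) (uOf M) (vOf M) (strip M) = M := addLastE_strip hM
  obtain ⟨-, -, hv1u1, hu12m⟩ := uv_facts hM1
  obtain ⟨-, -, hv2u2, hu22m⟩ := uv_facts hM
  have hlo1 : lastOp (strip M) = 2*m+1 - uOf (strip M) := (uv_facts hM1).1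
  have ha2 : uOf M ≤ uOf (strip M) + 1 := by
    have := hV1.2.2
    omega
  have hM2 : addLastE (m+1) (uOf M) (vOf M)
      (addLastE m (uOf (strip M)) (vOf (strip M)) (strip (strip M))) = M := by
    rw [hs1, hs2]
  have hb : vOf (strip M) < vOf M := by
    apply (lastTwo_cond hVt hv2u2 ha2).1.mp
    rw [hM2]
    exact hN
  have hcrM : crStat M = crStat (strip (strip M))
      + (uOf (strip M) - vOf (strip M)) + (uOf M - vOf M) := by
    have h1 := crStat_addLastE hV1
    rw [hs2] at h1
    have h2 := crStat_addLastE hVt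
    rw [hs1] at h2
    omega
  obtain ⟨hpm, hplo, hpcr, hpne, hpinv⟩ := psi_spec m (strip (strip M)) hVt.1
  have hVt' : Valid m (uOf (strip M)) (uOf (strip M) - vOf (strip M)) (psi m (strip (strip M))) :=
    ⟨hpm, by omega, by rw [hplo]; exact hVt.2.2⟩
  have hVN : Valid (m+1) (uOf M - vOf (strip M) - 1) (uOf M - vOf M)
      (addLastE m (uOf (strip M)) (uOf (strip M) - vOf (strip M)) (psi m (strip (strip M)))) :=
    valid2 hVt' (by omega) (by omega)
  refine ⟨isMatching_addLastE hVN, ?_, ?_, ?_⟩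
  · show neStat (addLastE (m+1) (uOf M - vOf (strip M) - 1) (uOf M - vOf M)
      (addLastE m (uOf (strip M)) (uOf (strip M) - vOf (strip M))
        (psi m (strip (strip M))))) = crStat M
    rw [neStat_addLastE hVN, neStat_addLastE hVt', hpne]
    omega
  · exact (lastTwo_cond hVt' (by omega) (by omega)).2.mpr (by omega)
  · show bwdT m (fwdT m M) = M
    rw [bwdT, show fwdT m M = addLastE (m+1) (uOf M - vOf (strip M) - 1) (uOf M - vOf M)
      (addLastE m (uOf (strip M)) (uOf (strip M) - vOf (strip M))
        (psi m (strip (strip M)))) from rfl]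
    rw [uOf_addLastE hVN, vOf_addLastE hVN, strip_addLastE hVN,
      uOf_addLastE hVt', vOf_addLastE hVt', strip_addLastE hVt', hpinv]
    rw [show uOf M - vOf (strip M) - 1 + (uOf (strip M) - (uOf (strip M) - vOf (strip M))) + 1
        = uOf M from by omega]
    rw [show uOf M - (uOf M - vOf M) = vOf M from by omega]
    rw [show uOf (strip M) - (uOf (strip M) - vOf (strip M)) = vOf (strip M) from by omega]
    rw [hs1, hs2]

lemma bwd_spec (hM : IsMatching (m+2) M)
    (hS : ∃ e f, AreLastTwo M e f ∧ SeparatedPair e f) :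
    IsMatching (m+2) (bwdT m M) ∧ crStat (bwdT m M) = neStat M ∧
    (∃ e f, AreLastTwo (bwdT m M) e f ∧ NestedPair e f) ∧ fwdT m (bwdT m M) = M := by
  have hM1 : IsMatching (m+1) (strip M) := strip_isMatching hM
  have hVt : Valid m (uOf (strip M)) (vOf (strip M)) (strip (strip M)) := strip_valid hM1
  have hV1 : Valid (m+1) (uOf M) (vOf M) (strip M) := strip_valid hM
  have hs1 : addLastE m (uOf (strip M)) (vOf (strip M)) (strip (strip M)) = strip M :=
    addLastE_strip hM1
  have hs2 : addLastE (m+1) (uOf M) (vOf M) (strip M) = M := addLastE_strip hM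
  obtain ⟨-, -, hv1u1, hu12m⟩ := uv_facts hM1
  obtain ⟨-, -, hv2u2, hu22m⟩ := uv_facts hM
  have hlo1 : lastOp (strip M) = 2*m+1 - uOf (strip M) := (uv_facts hM1).1
  have ha2 : uOf M ≤ uOf (strip M) + 1 := by
    have := hV1.2.2
    omega
  have hM2 : addLastE (m+1) (uOf M) (vOf M)
      (addLastE m (uOf (strip M)) (vOf (strip M)) (strip (strip M))) = M := by
    rw [hs1, hs2]
  have hb : uOf M ≤ vOf (strip M) := by
    apply (lastTwo_cond hVt hv2u2 ha2).2.mp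
    rw [hM2]
    exact hS
  have hneM : neStat M = neStat (strip (strip M)) + vOf (strip M) + vOf M := by
    have h1 := neStat_addLastE hV1
    rw [hs2] at h1
    have h2 := neStat_addLastE hVt
    rw [hs1] at h2
    omega
  obtain ⟨hpm, hplo, hpcr, hpne, hpinv⟩ := psi_spec m (strip (strip M)) hVt.1
  have hVt' : Valid m (uOf (strip M)) (uOf (strip M) - vOf (strip M)) (psi m (strip (strip M))) :=
    ⟨hpm, by omega, by rw [hplo]; exact hVt.2.2⟩
  have hVN : Valid (m+1) (uOf M + (uOf (strip M) - vOf (strip M)) + 1)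
      (uOf M + (uOf (strip M) - vOf (strip M)) + 1 - vOf M)
      (addLastE m (uOf (strip M)) (uOf (strip M) - vOf (strip M)) (psi m (strip (strip M)))) :=
    valid2 hVt' (by omega) (by omega)
  refine ⟨isMatching_addLastE hVN, ?_, ?_, ?_⟩
  · show crStat (addLastE (m+1) (uOf M + (uOf (strip M) - vOf (strip M)) + 1)
      (uOf M + (uOf (strip M) - vOf (strip M)) + 1 - vOf M)
      (addLastE m (uOf (strip M)) (uOf (strip M) - vOf (strip M))
        (psi m (strip (strip M))))) = neStat M
    rw [crStat_addLastE hVN, crStat_addLastE hVt', hpcr]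
    omega
  · exact (lastTwo_cond hVt' (by omega) (by omega)).1.mpr (by omega)
  · show fwdT m (bwdT m M) = M
    rw [fwdT, show bwdT m M = addLastE (m+1) (uOf M + (uOf (strip M) - vOf (strip M)) + 1)
      (uOf M + (uOf (strip M) - vOf (strip M)) + 1 - vOf M)
      (addLastE m (uOf (strip M)) (uOf (strip M) - vOf (strip M))
        (psi m (strip (strip M)))) from rfl]
    rw [uOf_addLastE hVN, vOf_addLastE hVN, strip_addLastE hVN,
      uOf_addLastE hVt', vOf_addLastE hVt', strip_addLastE hVt', hpinv]
    rw [show uOf M + (uOf (strip M) - vOf (strip M)) + 1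
        - (uOf (strip M) - vOf (strip M)) - 1 = uOf M from by omega]
    rw [show uOf M + (uOf (strip M) - vOf (strip M)) + 1
        - (uOf M + (uOf (strip M) - vOf (strip M)) + 1 - vOf M) = vOf M from by omega]
    rw [show uOf (strip M) - (uOf (strip M) - vOf (strip M)) = vOf (strip M) from by omega]
    rw [hs1, hs2]

end main

end CN

/-- for every `k ≥ 0` and `n ≥ 2`, there are as many matchings on `[2n]` with
exactly `k` crossings whose last two edges are nested as matchings with exactly `k` nestings
whose last two edges are separated. -/
theorem card_cr_lastTwoNested_eq_card_ne_lastTwoSeparated (k n : ℕ) (hn : 2 ≤ n) :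
    Nat.card {s : Finset (ℕ × ℕ) // IsMatching n s ∧ crStat s = k ∧
        ∃ e f, AreLastTwo s e f ∧ NestedPair e f}
      = Nat.card {s : Finset (ℕ × ℕ) // IsMatching n s ∧ neStat s = k ∧
        ∃ e f, AreLastTwo s e f ∧ SeparatedPair e f} := by
  obtain ⟨m, rfl⟩ : ∃ m, n = m + 2 := ⟨n - 2, by omega⟩
  apply Nat.card_congr
  refine
    { toFun := fun x => ⟨CN.fwdT m x.1, (CN.fwd_spec x.2.1 x.2.2.2).1,
        by rw [(CN.fwd_spec x.2.1 x.2.2.2).2.1, x.2.2.1], (CN.fwd_spec x.2.1 x.2.2.2).2.2.1⟩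
      invFun := fun x => ⟨CN.bwdT m x.1, (CN.bwd_spec x.2.1 x.2.2.2).1,
        by rw [(CN.bwd_spec x.2.1 x.2.2.2).2.1, x.2.2.1], (CN.bwd_spec x.2.1 x.2.2.2).2.2.1⟩
      left_inv := ?_
      right_inv := ?_ }
  · rintro ⟨s, hm, hcr, hN⟩
    exact Subtype.ext (CN.fwd_spec hm hN).2.2.2
  · rintro ⟨s, hm, hne, hS⟩
    exact Subtype.ext (CN.bwd_spec hm hS).2.2.2
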